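/- The Zaider-Minerbo TCP formula TCP(t) = [1 - n(t)/(n₀ + b·n₀·n(t)·∫₀ᵗ ds/n(s))]^{n₀}, where n(t) = n₀exp(bt - ∫₀ᵗ r(s)ds), always takes values in [0,1], and when b = 0 it reduces to TCP(t) = (1 - exp(-∫₀ᵗ r(s)ds))^{n₀}. -/

import Mathlib

/-- The Zaider–Minerbo TCP
`TCP(t) = [1 - n(t)/(n₀ + b n₀ n(t) ∫₀ᵗ ds/n(s))]^{n₀}` with
`n(t) = n₀ exp(bt - ∫₀ᵗ r(s)ds)` takes values in `[0,1]`, and for `b = 0`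
it reduces to `TCP(t) = (1 - exp(-∫₀ᵗ r(s)ds))^{n₀}`. -/
theorem zaider_minerbo_TCP (n₀ : ℕ) (hn₀ : 0 < n₀) (b : ℝ) (hb : 0 ≤ b)
    (r : ℝ → ℝ) (hr : Continuous r) (hrpos : ∀ t, 0 ≤ r t)
    (n : ℝ → ℝ)
    (hn : ∀ t, n t = (n₀ : ℝ) * Real.exp (b * t - ∫ s in (0:ℝ)..t, r s))
    (TCP : ℝ → ℝ)
    (hTCP : ∀ t, TCP t =
      (1 - n t / ((n₀ : ℝ) + b * (n₀ : ℝ) * n t *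
        ∫ s in (0:ℝ)..t, 1 / n s)) ^ n₀) :
    (∀ t ≥ (0:ℝ), 0 ≤ TCP t ∧ TCP t ≤ 1) ∧
      (b = 0 → ∀ t ≥ (0:ℝ),
        TCP t = (1 - Real.exp (-∫ s in (0:ℝ)..t, r s)) ^ n₀) := by
  set R : ℝ → ℝ := fun t => ∫ s in (0:ℝ)..t, r s with hRdef
  have hRderiv : ∀ t, HasDerivAt R (r t) t := fun t =>
    intervalIntegral.integral_hasDerivAt_right (hr.intervalIntegrable _ _)
      (hr.stronglyMeasurableAtFilter _ _) hr.continuousAt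
  have hRdiff : Differentiable ℝ R := fun t => (hRderiv t).differentiableAt
  set h : ℝ → ℝ := fun t => Real.exp (R t - b * t) with hhdef
  have hhcont : Continuous h :=
    Real.continuous_exp.comp (hRdiff.continuous.sub (continuous_const.mul continuous_id))
  have hhpos : ∀ t, 0 < h t := fun t => Real.exp_pos _
  set G : ℝ → ℝ := fun t => ∫ s in (0:ℝ)..t, h s with hGdef
  have hGderiv : ∀ t, HasDerivAt G (h t) t := fun t =>
    intervalIntegral.integral_hasDerivAt_right (hhcont.intervalIntegrable _ _)
      (hhcont.stronglyMeasurableAtFilter _ _) hhcont.continuousAt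
  set F : ℝ → ℝ := fun t => h t + b * G t with hFdef
  have hFderiv : ∀ t, HasDerivAt F (r t * h t) t := by
    intro t
    have h1 : HasDerivAt h ((r t - b) * h t) t := by
      have := ((hRderiv t).sub ((hasDerivAt_id t).const_mul b)).exp
      simpa [hhdef, mul_comm] using this
    have h2 := h1.add ((hGderiv t).const_mul b)
    exact h2.congr_deriv (by ring)
  have hFmono : Monotone F := by
    apply monotone_of_deriv_nonneg (fun t => (hFderiv t).differentiableAt)
    intro t
    rw [(hFderiv t).deriv]
    exact mul_nonneg (hrpos t) (hhpos t).le
  have hF0 : F 0 = 1 := by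
    simp [hFdef, hGdef, hhdef, hRdef]
  have hFge : ∀ t ≥ (0:ℝ), 1 ≤ F t := fun t ht => hF0 ▸ hFmono ht
  have hn0pos : (0:ℝ) < n₀ := Nat.cast_pos.mpr hn₀
  have hI : ∀ t, (∫ s in (0:ℝ)..t, 1 / n s) = (1 / (n₀:ℝ)) * G t := by
    intro t
    simp only [hGdef]
    rw [← intervalIntegral.integral_const_mul]
    apply intervalIntegral.integral_congr
    intro s _
    show 1 / n s = 1 / (n₀:ℝ) * Real.exp (R s - b * s)
    simp only [hRdef]
    rw [hn s, one_div, mul_inv, ← Real.exp_neg, neg_sub]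
    ring
  have hE : ∀ t, Real.exp (b * t - ∫ s in (0:ℝ)..t, r s) = (h t)⁻¹ := by
    intro t
    simp only [hhdef, hRdef]
    rw [← Real.exp_neg, neg_sub]
  have key : ∀ t ≥ (0:ℝ), n t / ((n₀:ℝ) + b * n₀ * n t * ∫ s in (0:ℝ)..t, 1 / n s)
      = 1 / F t := by
    intro t ht
    have hFt : (0:ℝ) < F t := lt_of_lt_of_le one_pos (hFge t ht)
    have hh := (hhpos t).ne'
    have hA : (n₀:ℝ) * (h t)⁻¹ ≠ 0 := mul_ne_zero hn0pos.ne' (inv_ne_zero hh)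
    have hFt' : h t + b * G t = F t := rfl
    rw [hI t, hn t, hE t]
    have hD : ((n₀:ℝ) + b * n₀ * ((n₀:ℝ) * (h t)⁻¹) * (1 / (n₀:ℝ) * G t))
        = (n₀:ℝ) * (h t)⁻¹ * F t := by
      rw [← hFt']
      field_simp
    rw [hD, div_mul_eq_div_div, div_self hA]
  constructor
  · intro t ht
    have hFt : (1:ℝ) ≤ F t := hFge t ht
    have hFt0 : (0:ℝ) < F t := lt_of_lt_of_le one_pos hFt
    rw [hTCP t, key t ht]
    have h1 : 1 / F t ≤ 1 := by
      rw [div_le_one hFt0]; exact hFt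
    have h2 : (0:ℝ) < 1 / F t := by positivity
    constructor
    · exact pow_nonneg (by linarith) _
    · exact pow_le_one₀ (by linarith) (by linarith)
  · intro hb0 t ht
    rw [hTCP t, hn t, hb0]
    simp only [zero_mul, mul_zero, add_zero, zero_sub]
    rw [mul_div_cancel_left₀ _ hn0pos.ne']
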